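/- (Global optimality) Suppose (λ̄, μ̄, ς̄) ∈ S_a⁺ is a stationary point of the canonical dual function Π^d (equivalently, (x̄, λ̄, μ̄, ς̄) is a stationary point of Ξ with (λ̄, μ̄, ς̄) ∈ S_a⁺, where x̄ is given by the explicit formula). If additionally μ̄ ≥ 0, then x̄ is the unique global minimizer of Π on the feasible set X_c: Π(x̄) < Π(x) for all x ∈ X_c, x ≠ x̄. -/

import Mathlib

open scoped RealInnerProductSpace

set_option maxHeartbeats 1000000

/-- Global optimality: a stationary point (x̄, λ̄, μ̄, ς̄) of Ξ with (λ̄, μ̄, ς̄) ∈ S_a⁺ and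
μ̄ ≥ 0 gives the unique global minimizer x̄ of Π on the feasible set X_c. -/
theorem stmt_14 (n : ℕ) (A : Matrix (Fin n) (Fin n) ℝ) (hA : A.PosDef)
    (r α η : ℝ) (hr : 0 < r) (hα : 0 < α)
    (f c : EuclideanSpace ℝ (Fin n))
    (yb zb : EuclideanSpace ℝ (Fin n)) (lam mu sig : ℝ)
    -- (λ̄, μ̄, ς̄) ∈ S_a⁺
    (h1 : (1 + lam • A).PosDef)
    (h2 : ((1 + mu * sig) • (1 + lam • A) - 1).PosDef)
    (hmu : 0 ≤ mu)
    -- (x̄, λ̄, μ̄, ς̄) is a stationary point of Ξ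
    (e1 : yb - zb + lam • (Matrix.toEuclideanLin A yb) = 0)
    (e2 : zb - yb + (mu * sig) • (zb - c) - mu • f = 0)
    (e3 : 1 / 2 * (⟪yb, Matrix.toEuclideanLin A yb⟫ - r ^ 2) = 0)
    (e4 : (1 / 2 * ‖zb - c‖ ^ 2) * sig - (sig ^ 2 / (2 * α) + η * sig) -
      ⟪f, zb - c⟫ = 0)
    (e5 : mu * (1 / 2 * ‖zb - c‖ ^ 2 - (sig / α + η)) = 0) :
    ∀ y z : EuclideanSpace ℝ (Fin n),
      1 / 2 * (⟪y, Matrix.toEuclideanLin A y⟫ - r ^ 2) = 0 →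
      α / 2 * (1 / 2 * ‖z - c‖ ^ 2 - η) ^ 2 - ⟪f, z - c⟫ = 0 →
      (y, z) ≠ (yb, zb) →
      1 / 2 * ‖yb - zb‖ ^ 2 < 1 / 2 * ‖y - z‖ ^ 2 := by
  intro y z hyfeas hzfeas hne
  set T := Matrix.toEuclideanLin A with hT
  have hS : ∀ a b : EuclideanSpace ℝ (Fin n), ⟪T a, b⟫ = ⟪a, T b⟫ :=
    Matrix.isHermitian_iff_isSymmetric.1 hA.1
  -- positivity facts from S_a⁺
  have hB : ∀ w : EuclideanSpace ℝ (Fin n), w ≠ 0 → 0 < ⟪w, w⟫ + lam * ⟪w, T w⟫ := by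
    intro w hw
    have := h1.dotProduct_mulVec_pos (x := WithLp.equiv 2 _ w) (by simpa using hw)
    have hww : ⟪w, w⟫ = dotProduct (star (WithLp.equiv 2 _ w)) (WithLp.equiv 2 _ w) := by
      rw [EuclideanSpace.inner_eq_star_dotProduct, dotProduct_comm]; rfl
    have hwT : ⟪w, T w⟫ = dotProduct (star (WithLp.equiv 2 _ w))
        (Matrix.mulVec A (WithLp.equiv 2 _ w)) := by
      rw [EuclideanSpace.inner_eq_star_dotProduct, dotProduct_comm]; rfl
    rw [hww, hwT]
    simpa [Matrix.add_mulVec, Matrix.one_mulVec, Matrix.smul_mulVec,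
      dotProduct_add, dotProduct_smul,
      EuclideanSpace.inner_eq_star_dotProduct, smul_eq_mul, hT] using this
  have hM : ∀ w : EuclideanSpace ℝ (Fin n), w ≠ 0 →
      0 < (1 + mu * sig) * (⟪w, w⟫ + lam * ⟪w, T w⟫) - ⟪w, w⟫ := by
    intro w hw
    have := h2.dotProduct_mulVec_pos (x := WithLp.equiv 2 _ w) (by simpa using hw)
    have h := this
    simp only [Matrix.sub_mulVec, Matrix.smul_mulVec, Matrix.add_mulVec,
      Matrix.one_mulVec, dotProduct_sub, dotProduct_smul,
      dotProduct_add, smul_eq_mul] at h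
    have hww : ⟪w, w⟫ = dotProduct (star (WithLp.equiv 2 _ w)) (WithLp.equiv 2 _ w) := by
      rw [EuclideanSpace.inner_eq_star_dotProduct, dotProduct_comm]; rfl
    have hwT : ⟪w, T w⟫ = dotProduct (star (WithLp.equiv 2 _ w))
        (Matrix.mulVec A (WithLp.equiv 2 _ w)) := by
      rw [EuclideanSpace.inner_eq_star_dotProduct, dotProduct_comm]; rfl
    rw [hww, hwT]; ring_nf; ring_nf at h; linarith
  set u := y - yb with hu
  set v := z - zb with hv
  have hy : y = yb + u := by simp [hu]
  have hz : z = zb + v := by simp [hv]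
  -- the quadratic expansion of Ξ around x̄
  have expand : (1/2*‖y-z‖^2 + lam/2*(⟪y, T y⟫ - r^2)
      + mu*((1/2*‖z-c‖^2)*sig - (sig^2/(2*α)+η*sig) - ⟪f, z-c⟫))
    = (1/2*‖yb-zb‖^2 + lam/2*(⟪yb, T yb⟫ - r^2)
      + mu*((1/2*‖zb-c‖^2)*sig - (sig^2/(2*α)+η*sig) - ⟪f, zb-c⟫))
    + ⟪yb - zb + lam • T yb, u⟫ + ⟪zb - yb + (mu*sig) • (zb - c) - mu • f, v⟫
    + 1/2*(‖u - v‖^2 + lam*⟪u, T u⟫ + (mu*sig)*‖v‖^2) := by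
    have h1 : ⟪yb, T u⟫ = ⟪u, T yb⟫ := by rw [real_inner_comm]; exact hS u yb
    rw [hy, hz]
    simp only [← real_inner_self_eq_norm_sq, map_add, inner_add_left, inner_add_right,
      inner_sub_left, inner_sub_right, real_inner_smul_left, real_inner_smul_right]
    ring_nf
    rw [real_inner_comm u yb, real_inner_comm v zb, real_inner_comm u zb,
      real_inner_comm v yb, real_inner_comm u v, real_inner_comm v c, real_inner_comm v f]
    linear_combination (lam/2) * h1 - lam * real_inner_comm u (T yb)
  rw [e1, e2, inner_zero_left, inner_zero_left] at expand
  -- the quadratic form Q is positive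
  have hne' : ¬(u = 0 ∧ v = 0) := by
    rintro ⟨h1', h2'⟩
    exact hne (by rw [hy, hz, h1', h2', add_zero, add_zero])
  have hQ : 0 < ‖u - v‖^2 + lam*⟪u, T u⟫ + (mu*sig)*‖v‖^2 := by
    -- first, 1 + mu*sig > 0, using some nonzero vector
    obtain ⟨w, hw⟩ : ∃ w : EuclideanSpace ℝ (Fin n), w ≠ 0 := by
      by_cases hu0 : u = 0
      · exact ⟨v, fun h => hne' ⟨hu0, h⟩⟩
      · exact ⟨u, hu0⟩
    have hwB := hB w hw
    have hwM := hM w hw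
    have hwpos : 0 < ⟪w, w⟫ := by
      rw [real_inner_self_eq_norm_sq]
      exact pow_pos (norm_pos_iff.2 hw) 2
    have ht : 0 < 1 + mu * sig := by nlinarith
    by_cases hu0 : u = 0
    · have hv0 : v ≠ 0 := fun h => hne' ⟨hu0, h⟩
      have hvpos : 0 < ‖v‖^2 := pow_pos (norm_pos_iff.2 hv0) 2
      rw [hu0]
      simp only [zero_sub, norm_neg, map_zero, inner_zero_right]
      nlinarith
    · have hM' := hM u hu0
      have key : (1 + mu*sig) * (‖u - v‖^2 + lam*⟪u, T u⟫ + (mu*sig)*‖v‖^2)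
          = ((1 + mu*sig) * (⟪u, u⟫ + lam * ⟪u, T u⟫) - ⟪u, u⟫)
            + ‖u - (1 + mu*sig) • v‖^2 := by
        simp only [← real_inner_self_eq_norm_sq, inner_sub_left, inner_sub_right,
          real_inner_smul_left, real_inner_smul_right]
        rw [real_inner_comm u v]
        ring
      have hnn : (0:ℝ) ≤ ‖u - (1 + mu*sig) • v‖^2 := by positivity
      nlinarith
  -- Ξ(x̄) = Π(x̄)
  have stepA : (1/2*‖yb-zb‖^2 + lam/2*(⟪yb, T yb⟫ - r^2)
      + mu*((1/2*‖zb-c‖^2)*sig - (sig^2/(2*α)+η*sig) - ⟪f, zb-c⟫))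
      = 1/2*‖yb-zb‖^2 := by
    rw [hT] at *
    linear_combination lam * e3 + mu * e4
  -- Ξ(x) ≤ Π(x) on the feasible set
  have stepB : (1/2*‖y-z‖^2 + lam/2*(⟪y, T y⟫ - r^2)
      + mu*((1/2*‖z-c‖^2)*sig - (sig^2/(2*α)+η*sig) - ⟪f, z-c⟫))
      ≤ 1/2*‖y-z‖^2 := by
    have hlam : lam/2*(⟪y, T y⟫ - r^2) = 0 := by
      rw [hT]; linear_combination lam * hyfeas
    have hbr : (1/2*‖z-c‖^2)*sig - (sig^2/(2*α)+η*sig) - ⟪f, z-c⟫ ≤ 0 := by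
      have hF : ⟪f, z-c⟫ = α/2*(1/2*‖z-c‖^2 - η)^2 := by linarith
      rw [hF]
      have key : (1/2*‖z-c‖^2)*sig - (sig^2/(2*α)+η*sig) - α/2*(1/2*‖z-c‖^2-η)^2
          = -((α*(1/2*‖z-c‖^2-η) - sig)^2/(2*α)) := by
        field_simp
        ring
      rw [key]
      have hnn : 0 ≤ (α*(1/2*‖z-c‖^2-η) - sig)^2/(2*α) := by positivity
      linarith
    nlinarith
  linarith [expand, stepA, stepB, hQ]
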